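/- Let M ≥ 1 and let A be the inverse of the M×M Vandermonde matrix V with V_{j,n} = j^(n-1) for j,n ∈ {1,…,M}. Then the last (M-th) row of A is given by A_{M,n} = (-1)^(M+n) / ((n-1)! * (M-n)!) for n = 1,…,M. -/

import Mathlib

open Finset fwdDiff Matrix

lemma fwdDiff_pow_aux (m : ℕ) : ∀ k ≤ m, (Δ_[(1:ℚ)])^[m] (fun x : ℚ => x ^ k)
    = fun _ => if k = m then (m.factorial : ℚ) else 0 := by
  induction m with
  | zero =>
    intro k hk
    interval_cases k
    simp [Nat.factorial]
  | succ m IH =>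
    intro k hk
    rw [Function.iterate_succ_apply]
    have hΔ : Δ_[(1:ℚ)] (fun x : ℚ => x ^ k)
        = ∑ j ∈ Finset.range k, (k.choose j : ℚ) • (fun x : ℚ => x ^ j) := by
      funext x
      simp only [fwdDiff, Finset.sum_apply, Pi.smul_apply, smul_eq_mul]
      have h1 : (x+1)^k = ∑ i ∈ Finset.range (k+1), x ^ i * (k.choose i : ℚ) := by
        simpa using add_pow x 1 k
      rw [h1, Finset.sum_range_succ, Nat.choose_self]
      push_cast
      rw [mul_one, add_sub_cancel_right]
      exact Finset.sum_congr rfl fun j _ => mul_comm _ _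
    rw [hΔ, fwdDiff_iter_finset_sum]
    have : ∀ j ∈ Finset.range k, (Δ_[(1:ℚ)])^[m] ((k.choose j : ℚ) • (fun x : ℚ => x ^ j))
        = (k.choose j : ℚ) • (fun _ : ℚ => if j = m then (m.factorial : ℚ) else 0) := by
      intro j hj
      have hj' := Finset.mem_range.mp hj
      rw [fwdDiff_iter_const_smul, IH j (by omega)]
    rw [Finset.sum_congr rfl this]
    funext x
    rw [Finset.sum_apply]
    simp only [Pi.smul_apply, smul_eq_mul, mul_ite, mul_zero]
    rw [Finset.sum_ite_eq' (Finset.range k) m (fun j => (k.choose j : ℚ) * m.factorial)]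
    by_cases hkm : k = m + 1
    · subst hkm
      rw [if_pos (Finset.self_mem_range_succ m), if_pos rfl, Nat.choose_succ_self_right,
        Nat.factorial_succ]
      push_cast
      ring
    · rw [if_neg (by simp; omega), if_neg (by omega)]

/-- The last row of the inverse of the Vandermonde matrix `V_{j,n} = j^(n-1)`,
`j, n ∈ {1,…,M}` (indexed here by `Fin M`): with `n = k+1`,
`A_{M,n} = (-1)^(M+n) / ((n-1)! (M-n)!)`. -/
theorem inverse_vandermonde_last_row (M : ℕ) (hM : 1 ≤ M) (k : Fin M) :
    (Matrix.of fun j n : Fin M => ((j : ℚ) + 1) ^ (n : ℕ))⁻¹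
        ⟨M - 1, by omega⟩ k =
      (-1 : ℚ) ^ (M + ((k : ℕ) + 1)) /
        ((k : ℕ).factorial * (M - ((k : ℕ) + 1)).factorial) := by
  classical
  set V : Matrix (Fin M) (Fin M) ℚ := Matrix.of fun j n : Fin M => ((j : ℚ) + 1) ^ (n : ℕ)
    with hVdef
  have hdet : V.det ≠ 0 := by
    have hvd : V = Matrix.vandermonde (fun j : Fin M => ((j : ℚ) + 1)) := rfl
    rw [hvd, Matrix.det_vandermonde_ne_zero_iff]
    intro a b hab
    simp only at hab
    have : ((a : ℕ) : ℚ) = ((b : ℕ) : ℚ) := by linarith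
    exact Fin.ext (by exact_mod_cast this)
  set i : Fin M := ⟨M - 1, by omega⟩ with hi
  set rr : Fin M → ℚ := fun n =>
    (-1 : ℚ) ^ (M + ((n : ℕ) + 1)) /
      ((n : ℕ).factorial * (M - ((n : ℕ) + 1)).factorial) with hrr
  have hM1 : M - 1 + 1 = M := by omega
  have key : rr ᵥ* V = Pi.single i 1 := by
    funext c
    have hc : (c : ℕ) ≤ M - 1 := by have := c.isLt; omega
    have hfd := congrFun (fwdDiff_pow_aux (M - 1) (c : ℕ) hc) 1
    rw [fwdDiff_iter_eq_sum_shift, hM1] at hfd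
    have hterm : ∀ n ∈ Finset.range M,
        (((-1 : ℤ) ^ (M - 1 - n) * ((M - 1).choose n) : ℤ) •
            ((1 : ℚ) + n • (1 : ℚ)) ^ (c : ℕ))
          = ((M - 1).factorial : ℚ) *
            ((-1 : ℚ) ^ (M + (n + 1)) / ((n).factorial * (M - (n + 1)).factorial)
              * ((n : ℚ) + 1) ^ (c : ℕ)) := by
      intro n hn
      have hn' : n ≤ M - 1 := by have := Finset.mem_range.mp hn; omega
      have hch := Nat.choose_mul_factorial_mul_factorial hn'
      have hsign : (-1 : ℚ) ^ (M + (n + 1)) = (-1 : ℚ) ^ (M - 1 - n) := by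
        have : M + (n + 1) = (M - 1 - n) + 2 * (n + 1) := by omega
        rw [this, pow_add, pow_mul]
        norm_num
      have hMn : M - (n + 1) = M - 1 - n := by omega
      rw [hMn, hsign, zsmul_eq_mul]
      push_cast
      have hfac : ((M-1).choose n : ℚ) * ((n).factorial : ℚ) * ((M-1-n).factorial : ℚ)
          = ((M-1).factorial : ℚ) := by exact_mod_cast congrArg (Nat.cast (R := ℚ)) hch
      have hne1 : ((n).factorial : ℚ) ≠ 0 := by positivity
      have hne2 : (((M-1-n)).factorial : ℚ) ≠ 0 := by positivity
      field_simp
      linear_combination ((1:ℚ) + (n:ℚ)) ^ (c:ℕ) * hfac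
    have hfacne : (((M - 1).factorial : ℚ)) ≠ 0 := by positivity
    rw [Finset.sum_congr rfl hterm, ← Finset.mul_sum] at hfd
    have hlhs : (rr ᵥ* V) c = ∑ n ∈ Finset.range M,
        ((-1 : ℚ) ^ (M + (n + 1)) / ((n).factorial * (M - (n + 1)).factorial)
          * ((n : ℚ) + 1) ^ (c : ℕ)) := by
      simp only [Matrix.vecMul, dotProduct, hrr, hVdef, Matrix.of_apply]
      exact Fin.sum_univ_eq_sum_range
        (fun n => (-1 : ℚ) ^ (M + (n + 1)) /
          ((n).factorial * (M - (n + 1)).factorial) * ((n : ℚ) + 1) ^ (c : ℕ)) M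
    have hs : (∑ n ∈ Finset.range M,
        ((-1 : ℚ) ^ (M + (n + 1)) / ((n).factorial * (M - (n + 1)).factorial)
          * ((n : ℚ) + 1) ^ (c : ℕ)))
        = if (c : ℕ) = M - 1 then (1 : ℚ) else 0 := by
      apply mul_left_cancel₀ hfacne
      rw [hfd]
      split_ifs <;> simp
    rw [hlhs, hs, Pi.single_apply]
    by_cases h : (c : ℕ) = M - 1 <;> simp [h, Fin.ext_iff, hi]
  have hu : IsUnit V.det := isUnit_iff_ne_zero.mpr hdet
  have h1 : V * V⁻¹ = 1 := Matrix.mul_nonsing_inv V hu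
  have hrow : V⁻¹ i = rr := by
    have h2 : rr ᵥ* (V * V⁻¹) = rr := by rw [h1, Matrix.vecMul_one]
    rw [← Matrix.vecMul_vecMul, key, Matrix.single_one_vecMul] at h2
    exact h2
  show V⁻¹ i k = _
  exact congrFun hrow k
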